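/- Let S be a commutative local ring with maximal ideal M containing a field F with S = F + M, and let k be a subfield of F. Then R = k + M is a local ring with maximal ideal M, and every prime ideal of R is a prime ideal of S; in particular R and S have the same prime spectrum as sets. -/

import Mathlib

theorem stmt_15 {S : Type*} [CommRing S] [IsLocalRing S]
    (F : Subring S) (hF : IsField F)
    (hFM : ∀ s : S, ∃ f ∈ F, s - f ∈ IsLocalRing.maximalIdeal S)
    (k : Subring S) (hkF : k ≤ F) (hk : IsField k)
    (R : Subring S)
    (hR : ∀ s : S, s ∈ R ↔ ∃ c ∈ k, s - c ∈ IsLocalRing.maximalIdeal S) :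
    IsLocalRing R ∧
    (∀ r : R, ¬ IsUnit r ↔ (r : S) ∈ IsLocalRing.maximalIdeal S) ∧
    (∀ P : Ideal R, P.IsPrime →
      ∃ Q : Ideal S, Q.IsPrime ∧ ∀ s : S, s ∈ Q ↔ ∃ h : s ∈ R, (⟨s, h⟩ : R) ∈ P) := by
  set M := IsLocalRing.maximalIdeal S with hMdef
  have hMR : ∀ s : S, s ∈ M → s ∈ R := by
    intro s hs
    exact (hR s).mpr ⟨0, zero_mem k, by simpa using hs⟩
  -- unit characterization
  have hUnit : ∀ r : R, IsUnit r ↔ (r : S) ∉ M := by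
    intro r
    constructor
    · intro h hm
      exact (IsLocalRing.mem_maximalIdeal _).mp hm (h.map R.subtype)
    · intro hm
      have hu : IsUnit (r : S) := by
        by_contra h
        exact hm ((IsLocalRing.mem_maximalIdeal _).mpr h)
      obtain ⟨u, hu⟩ := hu
      set v : S := ↑u⁻¹ with hv
      have hrv : (r : S) * v = 1 := by rw [← hu]; exact u.mul_inv
      obtain ⟨c, hck, hcm⟩ := (hR r).mp r.2
      have hc0 : c ≠ 0 := by
        intro h
        apply hm
        simpa [h] using hcm
      obtain ⟨d, hd⟩ := hk.mul_inv_cancel (a := ⟨c, hck⟩) (by simpa [Subtype.ext_iff] using hc0)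
      have hcd : c * (d : S) = 1 := by
        have := Subtype.ext_iff.mp hd
        push_cast at this
        exact this
      have hvR : v ∈ R := by
        refine (hR v).mpr ⟨d, d.2, ?_⟩
        have : v - (d : S) = (-(v * (d : S))) * ((r : S) - c) := by
          have : (-(v * (d : S))) * ((r : S) - c) = (c * d) * v - d * ((r:S) * v) := by ring
          rw [this, hcd, hrv]; ring
        rw [this]
        exact M.mul_mem_left _ hcm
      refine isUnit_iff_exists_inv.mpr ⟨⟨v, hvR⟩, ?_⟩
      exact Subtype.ext (by simpa using hrv)
  have hone : (1 : S) ∉ M := by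
    intro h
    exact (IsLocalRing.mem_maximalIdeal _).mp h isUnit_one
  haveI hNT : Nontrivial R := ⟨0, 1, fun h => by
    have : (0 : S) = 1 := congrArg Subtype.val h
    exact zero_ne_one this⟩
  have hLocal : IsLocalRing R := by
    apply IsLocalRing.of_isUnit_or_isUnit_one_sub_self
    intro a
    by_cases ha : (a : S) ∈ M
    · right
      apply (hUnit _).mpr
      intro h
      apply hone
      have : (1 : S) = ((1 - a : R) : S) + (a : S) := by push_cast; ring
      rw [this]
      exact M.add_mem h ha
    · exact Or.inl ((hUnit a).mpr ha)
  refine ⟨hLocal, fun r => ⟨fun h => by_contra fun hm => h ((hUnit r).mpr hm),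
      fun hm h => (hUnit r).mp h hm⟩, ?_⟩
  intro P hP
  have hPM : ∀ p : R, p ∈ P → (p : S) ∈ M := by
    intro p hp
    by_contra hm
    exact hP.ne_top (P.eq_top_of_isUnit_mem hp ((hUnit p).mpr hm))
  have key : ∀ (s : S) (p : R), p ∈ P → ∃ h : s * (p : S) ∈ R, (⟨s * p, h⟩ : R) ∈ P := by
    intro s p hp
    have hspM : ∀ t : S, t * (p : S) ∈ M := fun t => M.mul_mem_left t (hPM p hp)
    obtain ⟨f, hfF, hfm⟩ := hFM s
    have hmR : s - f ∈ R := hMR _ hfm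
    have h1 : (⟨s - f, hmR⟩ : R) * p ∈ P := P.mul_mem_left _ hp
    have hfpR : f * (p : S) ∈ R := hMR _ (hspM f)
    have hffpR : f * f * (p : S) ∈ R := hMR _ (by simpa [mul_assoc] using hspM (f * f))
    have hq : (⟨f * p, hfpR⟩ : R) ∈ P := by
      have h2 : (⟨f * p, hfpR⟩ : R) * ⟨f * p, hfpR⟩ = (⟨f * f * p, hffpR⟩ : R) * p :=
        Subtype.ext (by push_cast; ring)
      have h3 : (⟨f * p, hfpR⟩ : R) * ⟨f * p, hfpR⟩ ∈ P := by
        rw [h2]; exact P.mul_mem_left _ hp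
      rcases hP.mem_or_mem h3 with h | h <;> exact h
    refine ⟨hMR _ (hspM s), ?_⟩
    have heq : (⟨s * p, hMR _ (hspM s)⟩ : R) = ⟨s - f, hmR⟩ * p + ⟨f * p, hfpR⟩ :=
      Subtype.ext (by push_cast; ring)
    rw [heq]
    exact P.add_mem h1 hq
  refine ⟨{ carrier := {s : S | ∃ h : s ∈ R, (⟨s, h⟩ : R) ∈ P}
            add_mem' := ?_
            zero_mem' := ?_
            smul_mem' := ?_ }, ⟨?_, ?_⟩, fun s => Iff.rfl⟩
  · rintro a b ⟨ha, haP⟩ ⟨hb, hbP⟩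
    refine ⟨R.add_mem ha hb, ?_⟩
    have : (⟨a + b, R.add_mem ha hb⟩ : R) = ⟨a, ha⟩ + ⟨b, hb⟩ := Subtype.ext rfl
    rw [this]
    exact P.add_mem haP hbP
  · refine ⟨R.zero_mem, ?_⟩
    have : (⟨(0 : S), R.zero_mem⟩ : R) = 0 := rfl
    rw [this]; exact P.zero_mem
  · rintro c x ⟨hx, hxP⟩
    simpa [smul_eq_mul] using key c ⟨x, hx⟩ hxP
  · intro h
    have h1 : ∃ hh : (1 : S) ∈ R, (⟨(1:S), hh⟩ : R) ∈ P := by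
      have := Ideal.eq_top_iff_one _ |>.mp h
      exact this
    obtain ⟨h1R, h1P⟩ := h1
    exact hP.ne_top (P.eq_top_iff_one.mpr (by exact h1P))
  · rintro x y ⟨hxy, hxyP⟩
    have hxyM : x * y ∈ M := hPM _ hxyP
    by_cases hx : x ∈ M
    · by_cases hy : y ∈ M
      · have hxR := hMR x hx
        have hyR := hMR y hy
        have : (⟨x, hxR⟩ : R) * ⟨y, hyR⟩ = ⟨x * y, hxy⟩ := Subtype.ext rfl
        rcases hP.mem_or_mem (this ▸ hxyP) with h | h
        · exact Or.inl ⟨hxR, h⟩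
        · exact Or.inr ⟨hyR, h⟩
      · -- y is a unit in S
        have hu : IsUnit y := by
          by_contra h
          exact hy ((IsLocalRing.mem_maximalIdeal _).mpr h)
        obtain ⟨u, hu⟩ := hu
        have hxx : (↑u⁻¹ : S) * (x * y) = x := by
          rw [← hu]
          have := u.inv_mul
          calc (↑u⁻¹ : S) * (x * ↑u) = x * ((↑u⁻¹ : S) * ↑u) := by ring
            _ = x := by rw [this, mul_one]
        left
        have := key (↑u⁻¹ : S) ⟨x * y, hxy⟩ hxyP
        rw [show ((⟨x * y, hxy⟩ : R) : S) = x * y from rfl, hxx] at this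
        exact this
    · -- x is a unit in S
      have hu : IsUnit x := by
        by_contra h
        exact hx ((IsLocalRing.mem_maximalIdeal _).mpr h)
      obtain ⟨u, hu⟩ := hu
      have hyy : (↑u⁻¹ : S) * (x * y) = y := by
        rw [← hu]
        have := u.inv_mul
        calc (↑u⁻¹ : S) * (↑u * y) = y * ((↑u⁻¹ : S) * ↑u) := by ring
          _ = y := by rw [this, mul_one]
      right
      have := key (↑u⁻¹ : S) ⟨x * y, hxy⟩ hxyP
      rw [show ((⟨x * y, hxy⟩ : R) : S) = x * y from rfl, hyy] at this
      exact this
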